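/- Under the standing assumptions, if ⋂_{n≥1} Pⁿ = 0 then every element of 1 + P is a unit of R, every element of C(P) = {x ∈ R | x + P is a regular element of R/P} is regular in R, and C(P) satisfies the left and right Ore conditions. -/

import Mathlib

open Pointwise

/-- `P` is a two-sided ideal of the subring `R` of `A`. -/
def IsIdealOf {A : Type*} [Ring A] (R : Subring A) (P : Set A) : Prop :=
  P ⊆ (R : Set A) ∧ (0 : A) ∈ P ∧ (∀ x ∈ P, ∀ y ∈ P, x + y ∈ P) ∧ (∀ x ∈ P, -x ∈ P) ∧
    (∀ r ∈ R, ∀ p ∈ P, r * p ∈ P) ∧ (∀ r ∈ R, ∀ p ∈ P, p * r ∈ P)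

/-- `(R, P)` is a prime in the ring `A`. -/
def IsPrimeIn {A : Type*} [Ring A] (R : Subring A) (P : Set A) : Prop :=
  IsIdealOf R P ∧ ∀ x y : A, (∀ r ∈ R, x * r * y ∈ P) → x ∈ P ∨ y ∈ P

/-- `(R, P)` is a strict fractional prime in the ring `A`. -/
def IsStrictFractionalPrime {A : Type*} [Ring A] (R : Subring A) (P : Set A) : Prop :=
  IsPrimeIn R P ∧ ∀ r : A, r ≠ 0 → ∃ x ∈ R, ∃ y ∈ R, x * r * y ≠ 0 ∧ x * r * y ∈ R

/-- The set of elements of the subring `R` which are regular in `R`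
(non-zero-divisors of the ring `R`). -/
def regularIn {A : Type*} [Ring A] (R : Subring A) : Set A :=
  {x : A | x ∈ R ∧ (∀ y ∈ R, x * y = 0 → y = 0) ∧ (∀ y ∈ R, y * x = 0 → y = 0)}

/-- A ring is Goldie if its set of regular elements satisfies the left and right Ore
conditions and the corresponding Ore localization is a semisimple ring. -/
def IsGoldieRing (R : Type*) [Ring R] : Prop :=
  (∀ (r : R), ∀ s ∈ nonZeroDivisors R, ∃ r' : R, ∃ s' ∈ nonZeroDivisors R, s' * r = r' * s) ∧
  (∀ (r : R), ∀ s ∈ nonZeroDivisors R, ∃ r' : R, ∃ s' ∈ nonZeroDivisors R, r * s' = s * r') ∧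
  ∃ _i : OreLocalization.OreSet (nonZeroDivisors R),
    IsSemisimpleRing (OreLocalization (nonZeroDivisors R) R)

/-- `A^P`, the set of elements of `A` stabilizing `P` on both sides. -/
def stabilizerSet {A : Type*} [Ring A] (P : Set A) : Set A :=
  {a : A | (∀ p ∈ P, a * p ∈ P) ∧ ∀ p ∈ P, p * a ∈ P}

/-- The fractional `R`-ideals of `A`. -/
def IsFractionalIdeal {A : Type*} [Ring A] (R : Subring A) (I : Set A) : Prop :=
  ((0 : A) ∈ I ∧ (∀ x ∈ I, ∀ y ∈ I, x + y ∈ I) ∧ (∀ x ∈ I, -x ∈ I)) ∧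
  (∀ r ∈ R, ∀ x ∈ I, r * x ∈ I) ∧ (∀ r ∈ R, ∀ x ∈ I, x * r ∈ I) ∧
  (∃ u ∈ I, u ∈ regularIn R) ∧ (∃ r ∈ regularIn R, ∀ x ∈ I, r * x ∈ (R : Set A))

/-- The fractional ideal `RaR` generated by an element `a ∈ A`. -/
def genFracIdeal {A : Type*} [Ring A] (R : Subring A) (a : A) : Set A :=
  (R : Set A) * {a} * (R : Set A)

/-- `v(I) = (P : I) = {a ∈ A ∣ aI ⊆ P}`. -/
def vP {A : Type*} [Ring A] (P I : Set A) : Set A :=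
  {a : A | ∀ x ∈ I, a * x ∈ P}

/-- The additive subgroup generated by the `n`-fold products of elements of `P`. -/
def idealPow {A : Type*} [Ring A] (P : Set A) (n : ℕ) : Set A :=
  (AddSubgroup.closure (P ^ n) : Set A)

/-- `C(P)`: the elements of `R` which are regular modulo `P`. -/
def CP {A : Type*} [Ring A] (R : Subring A) (P : Set A) : Set A :=
  {x : A | x ∈ R ∧ (∀ y ∈ R, x * y ∈ P → y ∈ P) ∧ ∀ y ∈ R, y * x ∈ P → y ∈ P}

/-- `R` is an order in `A`: every regular element of `R` is invertible in `A` and every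
element of `A` is of the form `s⁻¹ * r` and of the form `r' * s'⁻¹` with `r, r' ∈ R` and
`s, s'` regular in `R`. -/
def IsOrderIn {A : Type*} [Ring A] (R : Subring A) : Prop :=
  (∀ s ∈ regularIn R, IsUnit s) ∧
  (∀ a : A, ∃ s ∈ regularIn R, ∃ r ∈ (R : Set A), s * a = r) ∧
  (∀ a : A, ∃ s ∈ regularIn R, ∃ r ∈ (R : Set A), a * s = r)

/-- `R` is a Dubrovin valuation ring of `A` with associated ideal `P`:
`P` is a two-sided ideal of `R` such that `R/P` is a simple Artinian ring and for every
`a ∈ A \ R` there are `x, y ∈ R` with `xa ∈ R \ P` and `ay ∈ R \ P`. -/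
def IsDubrovinValuation {A : Type*} [Ring A] (R : Subring A) (P : Set A) : Prop :=
  IsIdealOf R P ∧
  (∀ Q : TwoSidedIdeal R, (∀ x : R, x ∈ Q ↔ (x : A) ∈ P) →
    IsSimpleRing Q.ringCon.Quotient ∧ IsArtinianRing Q.ringCon.Quotient) ∧
  ∀ a : A, a ∉ R →
    (∃ x ∈ R, x * a ∈ R ∧ x * a ∉ P) ∧ (∃ y ∈ R, a * y ∈ R ∧ a * y ∉ P)

/-- `P` coincides with the Jacobson radical of the subring `R` (the intersection of the
maximal left ideals of `R`). -/
def IsJacobsonRadicalOf {A : Type*} [Ring A] (R : Subring A) (P : Set A) : Prop :=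
  ∀ x : R, (x : A) ∈ P ↔ x ∈ (⊥ : Ideal R).jacobson

/-- A simple Artinian ring is semisimple. -/
theorem aux_isSemisimpleRing (A : Type*) [Ring A] [IsSimpleRing A] [IsArtinianRing A] :
    IsSemisimpleRing A := by
  classical
  set S : Set (Submodule A A) := {m | IsSimpleModule A m} with hS
  -- right multiplication stability of the socle
  have hmap : ∀ (y : A), ∀ x ∈ sSup S, x * y ∈ sSup S := by
    intro y x hx
    have hle : Submodule.map (LinearMap.toSpanSingleton A A y) (sSup S) ≤ sSup S := by
      rw [(Submodule.gc_map_comap (LinearMap.toSpanSingleton A A y)).l_sSup]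
      refine iSup₂_le fun m hm => ?_
      haveI : IsSimpleModule A m := hm
      rcases LinearMap.injective_or_eq_zero
          ((LinearMap.toSpanSingleton A A y).domRestrict m) with hinj | h0
      · have hsimple : IsSimpleModule A
            (Submodule.map (LinearMap.toSpanSingleton A A y) m) := by
          rw [← LinearMap.range_domRestrict]
          exact IsSimpleModule.congr (LinearEquiv.ofInjective _ hinj).symm
        exact le_sSup hsimple
      · rw [← LinearMap.range_domRestrict, h0, LinearMap.range_zero]
        exact bot_le
    refine hle ⟨x, hx, ?_⟩
    simp [LinearMap.toSpanSingleton_apply, smul_eq_mul]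
  have hsoc : sSup S = ⊤ := by
    let I : TwoSidedIdeal A := TwoSidedIdeal.mk' (SetLike.coe (sSup S))
      (Submodule.zero_mem _)
      (fun hx hy => Submodule.add_mem _ hx hy)
      (fun hx => Submodule.neg_mem _ hx)
      (fun {x y} hy => by simpa [smul_eq_mul] using Submodule.smul_mem _ x hy)
      (fun {x y} hx => hmap y x hx)
    have hIne : I ≠ ⊥ := by
      haveI : IsAtomic (Submodule A A) := isAtomic_of_orderBot_wellFounded_lt wellFounded_lt
      rcases eq_bot_or_exists_atom_le (⊤ : Submodule A A) with h | ⟨a, ha, -⟩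
      · exact absurd h.symm bot_ne_top
      · obtain ⟨z, hz, hz0⟩ := Submodule.ne_bot_iff a |>.mp ha.1
        have hzS : z ∈ sSup S := le_sSup (show a ∈ S from isSimpleModule_iff_isAtom.mpr ha) hz
        intro hbot
        apply hz0
        have : z ∈ I := by
          rw [TwoSidedIdeal.mem_mk']
          exact hzS
        rwa [hbot, TwoSidedIdeal.mem_bot] at this
    have hItop : I = ⊤ := (IsSimpleOrder.eq_bot_or_eq_top I).resolve_left hIne
    rw [Submodule.eq_top_iff']
    intro x
    have : x ∈ I := by rw [hItop]; trivial
    rwa [TwoSidedIdeal.mem_mk'] at this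
  exact IsSemisimpleModule.of_sSup_simples_eq_top hsoc

/-- von Neumann regularity in a semisimple ring. -/
theorem aux_vnr (A : Type*) [Ring A] (hss : IsSemisimpleRing A) (c : A) :
    ∃ v : A, c * v * c = c := by
  haveI := hss
  obtain ⟨D, hD⟩ := exists_isCompl (Submodule.span A {c})
  set π : A →ₗ[A] A :=
    (Submodule.span A {c}).subtype.comp (Submodule.projectionOnto _ D hD) with hπ
  have hπx : ∀ x : A, π x = x * (π 1) := by
    intro x
    have h1 : π x = π (x • (1 : A)) := by rw [smul_eq_mul, mul_one]
    rw [h1, map_smul, smul_eq_mul]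
  have hc : c ∈ Submodule.span A {c} := Submodule.mem_span_singleton_self c
  have hπc : π c = c := by
    have := Submodule.linearProjOfIsCompl_apply_left hD ⟨c, hc⟩
    simp only [hπ, LinearMap.comp_apply]
    rw [this]
    rfl
  have he : π 1 ∈ Submodule.span A {c} := by
    simp only [hπ, LinearMap.comp_apply]
    exact SetLike.coe_mem _
  obtain ⟨a, ha⟩ := Submodule.mem_span_singleton.mp he
  refine ⟨a, ?_⟩
  rw [smul_eq_mul] at ha
  have := hπx c
  rw [hπc, ← ha] at this
  rw [mul_assoc, ← this]

/-- In a semisimple (hence noetherian) ring, a left inverse is a two-sided inverse. -/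
theorem aux_unit_of_left_inv (A : Type*) [Ring A] (hss : IsSemisimpleRing A) {v c : A}
    (h : v * c = 1) : IsUnit c := by
  haveI := hss
  haveI : IsNoetherian A A := inferInstance
  set f := LinearMap.toSpanSingleton A A c with hf
  have hsurj : Function.Surjective f := by
    intro x
    refine ⟨x * v, ?_⟩
    simp only [hf, LinearMap.toSpanSingleton_apply, smul_eq_mul]
    rw [mul_assoc, h, mul_one]
  have hinj := IsNoetherian.injective_of_surjective_endomorphism f hsurj
  have hcv : c * v = 1 := by
    apply hinj
    simp only [hf, LinearMap.toSpanSingleton_apply, smul_eq_mul]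
    rw [mul_assoc, h, mul_one, one_mul]
  exact ⟨⟨c, v, hcv, h⟩, rfl⟩

theorem statement_7 {A : Type*} [Ring A] [IsSimpleRing A] [IsArtinianRing A]
    (R : Subring A) (P : Set A)
    (hprime : IsStrictFractionalPrime R P)
    (hRP : (R : Set A) = stabilizerSet P)
    (hGoldie : IsGoldieRing R)
    (hinv : ∀ u : Aˣ, ∀ p ∈ P, (u : A) * p * (↑u⁻¹ : A) ∈ P)
    (hint : (⋂ n : ℕ, idealPow P (n + 1)) = {0}) :
    (∀ p ∈ P, ∃ w ∈ R, (1 + p) * w = 1 ∧ w * (1 + p) = 1) ∧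
    (∀ c ∈ CP R P, c ∈ regularIn R) ∧
    (∀ r ∈ R, ∀ c ∈ CP R P, ∃ r' ∈ R, ∃ c' ∈ CP R P, c' * r = r' * c) ∧
    (∀ r ∈ R, ∀ c ∈ CP R P, ∃ r' ∈ R, ∃ c' ∈ CP R P, r * c' = c * r') := by
  obtain ⟨⟨⟨hPR, hP0, hPadd, hPneg, hPmulL, hPmulR⟩, hpr⟩, hstrict⟩ := hprime
  have hss : IsSemisimpleRing A := aux_isSemisimpleRing A
  -- membership in iInter of idealPow implies zero
  have hzero : ∀ x : A, (∀ n : ℕ, x ∈ P ^ (n + 1)) → x = 0 := by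
    intro x hx
    have : x ∈ ⋂ n : ℕ, idealPow P (n + 1) :=
      Set.mem_iInter.mpr fun n => AddSubgroup.subset_closure (hx n)
    rw [hint] at this
    exact this
  -- 1 ∉ P
  have hone : (1 : A) ∉ P := by
    intro h1
    exact one_ne_zero (hzero 1 fun n => Set.one_mem_pow h1)
  -- idempotents in P are zero
  have hidem : ∀ e : A, e * e = e → e ∈ P → e = 0 := by
    intro e he heP
    refine hzero e fun n => ?_
    have hpow : ∀ m : ℕ, e ^ (m + 1) = e := by
      intro m
      induction m with
      | zero => simp
      | succ m ih => rw [pow_succ, ih, he]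
    rw [← hpow n]
    exact Set.pow_mem_pow heP
  -- characterization of membership in R
  have hmemR : ∀ x : A, x ∈ R ↔ ((∀ p ∈ P, x * p ∈ P) ∧ (∀ p ∈ P, p * x ∈ P)) := by
    intro x
    constructor
    · intro hx
      have hx' : x ∈ stabilizerSet P := by rw [← hRP]; exact hx
      exact hx'
    · intro hx
      have hx' : x ∈ stabilizerSet P := hx
      rw [← SetLike.mem_coe, hRP]
      exact hx'
  -- conjugation preserves R
  have hconjR : ∀ u : Aˣ, ∀ r ∈ R, (u : A) * r * (↑u⁻¹ : A) ∈ R := by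
    intro u r hr
    refine (hmemR _).mpr ⟨?_, ?_⟩
    · intro p hp
      have h1 : (↑u⁻¹ : A) * p * (↑(u⁻¹)⁻¹ : A) ∈ P := hinv u⁻¹ p hp
      rw [inv_inv] at h1
      have h2 : r * ((↑u⁻¹ : A) * p * (u : A)) ∈ P := ((hmemR r).mp hr).1 _ h1
      have h3 : (u : A) * (r * ((↑u⁻¹ : A) * p * (u : A))) * (↑u⁻¹ : A) ∈ P := hinv u _ h2
      have heq : (u : A) * (r * ((↑u⁻¹ : A) * p * (u : A))) * (↑u⁻¹ : A)
          = (u : A) * r * (↑u⁻¹ : A) * p := by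
        simp only [mul_assoc, Units.mul_inv_cancel_left, Units.mul_inv, mul_one]
      rwa [heq] at h3
    · intro p hp
      have h1 : (↑u⁻¹ : A) * p * (↑(u⁻¹)⁻¹ : A) ∈ P := hinv u⁻¹ p hp
      rw [inv_inv] at h1
      have h2 : ((↑u⁻¹ : A) * p * (u : A)) * r ∈ P := ((hmemR r).mp hr).2 _ h1
      have h3 : (u : A) * (((↑u⁻¹ : A) * p * (u : A)) * r) * (↑u⁻¹ : A) ∈ P := hinv u _ h2
      have heq : (u : A) * (((↑u⁻¹ : A) * p * (u : A)) * r) * (↑u⁻¹ : A)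
          = p * ((u : A) * r * (↑u⁻¹ : A)) := by
        simp only [mul_assoc, Units.mul_inv_cancel_left]
      rwa [heq] at h3
  -- trichotomy helper : inverse of a unit not in P lies in R
  have htri : ∀ u : Aˣ, (u : A) ∉ P → (↑u⁻¹ : A) ∈ R := by
    intro u hu
    have hinvP : ∀ q ∈ P, (↑u⁻¹ : A) * q ∈ P := by
      intro q hq
      by_contra hh
      have hall : ∀ r ∈ R, (u : A) * r * ((↑u⁻¹ : A) * q) ∈ P := by
        intro r hr
        have hur : (u : A) * r * (↑u⁻¹ : A) ∈ R := hconjR u r hr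
        have h2 : ((u : A) * r * (↑u⁻¹ : A)) * q ∈ P := ((hmemR _).mp hur).1 q hq
        rw [← mul_assoc]
        exact h2
      rcases hpr _ _ hall with h | h
      · exact hu h
      · exact hh h
    refine (hmemR _).mpr ⟨hinvP, ?_⟩
    intro q hq
    have h1 : (u : A) * q * (↑u⁻¹ : A) ∈ P := hinv u q hq
    have h2 : (↑u⁻¹ : A) * ((u : A) * q * (↑u⁻¹ : A)) ∈ P := hinvP _ h1
    have heq : (↑u⁻¹ : A) * ((u : A) * q * (↑u⁻¹ : A)) = q * (↑u⁻¹ : A) := by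
      simp only [mul_assoc, Units.inv_mul_cancel_left]
    rwa [heq] at h2
  -- elements of 1 + (square-zero) are not in P
  have hPne : ∀ m : A, m * m = 0 → (1 + m) ∉ P := by
    intro m hm hmem
    apply hone
    have hsq : (1 + m) * (1 + m) = (1 + m) + (1 + m) - 1 := by
      have : (1 + m) * (1 + m) = (1 + m) + (1 + m) - 1 + m * m := by noncomm_ring
      rw [this, hm, add_zero]
    have h1 : (1 + m) * (1 + m) ∈ P := hPmulL _ (hPR hmem) _ hmem
    have hrep : (1 : A) = (1 + m) + (1 + m) + -((1 + m) * (1 + m)) := by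
      rw [hsq]; abel
    rw [hrep]
    exact hPadd _ (hPadd _ hmem _ hmem) _ (hPneg _ h1)
  -- every element of C(P) is a unit of A
  have hCPunit : ∀ c ∈ CP R P, IsUnit c := by
    rintro c ⟨hcR, hc1, hc2⟩
    have hcP : c ∉ P := by
      intro h
      exact hone (hc1 1 (Subring.one_mem R) (by rwa [mul_one]))
    obtain ⟨v, hv⟩ := aux_vnr A hss c
    set k : A := 1 - v * c with hk
    have hck : c * k = 0 := by
      rw [hk, mul_sub, mul_one, ← mul_assoc, hv, sub_self]
    have hvc2 : v * c * (v * c) = v * c := by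
      rw [mul_assoc v c (v * c), ← mul_assoc c v c, hv]
    have hkk : k * k = k := by
      rw [hk, sub_mul, one_mul, mul_sub, mul_one, hvc2, sub_self, sub_zero]
    have hkey : ∀ x : A, k * x * (1 - k) ∈ P := by
      intro x
      set n : A := k * x * (1 - k) with hn
      have h1k : (1 - k) * k = 0 := by rw [sub_mul, one_mul, hkk, sub_self]
      have hnn : n * n = 0 := by
        have : n * n = k * x * ((1 - k) * k) * (x * (1 - k)) := by
          rw [hn]; simp only [mul_assoc]
        rw [this, h1k, mul_zero, zero_mul]
      have hcn : c * n = 0 := by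
        rw [hn, ← mul_assoc, ← mul_assoc, hck, zero_mul, zero_mul]
      have hmul1 : (1 + n) * (1 - n) = 1 := by
        have : (1 + n) * (1 - n) = 1 - n * n := by noncomm_ring
        rw [this, hnn, sub_zero]
      have hmul2 : (1 - n) * (1 + n) = 1 := by
        have : (1 - n) * (1 + n) = 1 - n * n := by noncomm_ring
        rw [this, hnn, sub_zero]
      set un : Aˣ := ⟨1 + n, 1 - n, hmul1, hmul2⟩ with hun
      have hcoe : (un : A) = 1 + n := rfl
      have hcoeinv : (↑un⁻¹ : A) = 1 - n := rfl
      have hu1 : (un : A) ∉ P := by rw [hcoe]; exact hPne n hnn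
      have hu2 : (↑un⁻¹ : A) ∉ P := by
        rw [hcoeinv]
        have : (1 : A) - n = 1 + (-n) := by noncomm_ring
        rw [this]
        exact hPne (-n) (by rw [neg_mul_neg, hnn])
      have h1nR : ((1 : A) + n) ∈ R := by
        have := htri un⁻¹ hu2
        rwa [inv_inv, hcoe] at this
      have hnR : n ∈ R := by
        have := R.sub_mem h1nR (R.one_mem)
        simpa using this
      exact hc1 n hnR (by rw [hcn]; exact hP0)
    rcases hpr k (1 - k) (fun r _ => hkey r) with hkP | hkP
    · have hk0 : k = 0 := hidem k hkk hkP
      have hvc : v * c = 1 := by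
        have : (1 : A) - v * c = 0 := by rw [← hk, hk0]
        have h' := sub_eq_zero.mp this
        exact h'.symm
      exact aux_unit_of_left_inv A hss hvc
    · exfalso
      have h1k : (1 : A) - k = v * c := by rw [hk]; abel
      have hvcP : v * c ∈ P := by rwa [h1k] at hkP
      have hvc0 : v * c = 0 := hidem _ hvc2 hvcP
      have hc0 : c = 0 := by rw [← hv, mul_assoc, hvc0, mul_zero]
      exact hcP (by rw [hc0]; exact hP0)
  -- 1 + p lies in C(P)
  have hCP1p : ∀ p ∈ P, (1 + p) ∈ CP R P := by
    intro p hp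
    refine ⟨R.add_mem R.one_mem (hPR hp), ?_, ?_⟩
    · intro y hy hxy
      have h1 : p * y ∈ P := hPmulR y hy p hp
      have : y = (1 + p) * y + -(p * y) := by noncomm_ring
      rw [this]
      exact hPadd _ hxy _ (hPneg _ h1)
    · intro y hy hxy
      have h1 : y * p ∈ P := hPmulL y hy p hp
      have : y = y * (1 + p) + -(y * p) := by noncomm_ring
      rw [this]
      exact hPadd _ hxy _ (hPneg _ h1)
  refine ⟨?_, ?_, ?_, ?_⟩
  · -- every element of 1 + P is a unit of R
    intro p hp
    obtain ⟨u, hu⟩ := hCPunit _ (hCP1p p hp)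
    have hnotP : (u : A) ∉ P := by
      rw [hu]
      intro h
      apply hone
      have : (1 : A) = (1 + p) + -p := by abel
      rw [this]
      exact hPadd _ h _ (hPneg _ hp)
    refine ⟨↑u⁻¹, htri u hnotP, ?_, ?_⟩
    · rw [← hu]; exact u.mul_inv
    · rw [← hu]; exact u.inv_mul
  · -- C(P) consists of regular elements
    intro c hc
    obtain ⟨u, hu⟩ := hCPunit c hc
    refine ⟨hc.1, ?_, ?_⟩
    · intro y _ h0
      have : (↑u⁻¹ : A) * (c * y) = y := by
        rw [← hu, ← mul_assoc, Units.inv_mul, one_mul]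
      rw [h0, mul_zero] at this
      exact this.symm
    · intro y _ h0
      have : (y * c) * (↑u⁻¹ : A) = y := by
        rw [← hu, mul_assoc, Units.mul_inv, mul_one]
      rw [h0, zero_mul] at this
      exact this.symm
  · -- left Ore condition
    intro r hr c hc
    obtain ⟨u, hu⟩ := hCPunit c hc
    refine ⟨c * r * (↑u⁻¹ : A), ?_, c, hc, ?_⟩
    · have := hconjR u r hr
      rwa [hu] at this
    · rw [mul_assoc (c * r) _ c, ← hu, Units.inv_mul, mul_one]
  · -- right Ore condition
    intro r hr c hc
    obtain ⟨u, hu⟩ := hCPunit c hc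
    refine ⟨(↑u⁻¹ : A) * r * c, ?_, c, hc, ?_⟩
    · have := hconjR u⁻¹ r hr
      rwa [inv_inv, hu] at this
    · rw [← mul_assoc, ← mul_assoc, ← hu, Units.mul_inv, one_mul]
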